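/- Consider the tetrahedral N = 3 JNR data with equal unit weights and poles a₀ = (1,1,1), a₁ = (1,−1,−1), a₂ = (−1,1,−1), a₃ = (−1,−1,1) in ℝ³, and let f(x) = Σᵢ₌₀³ log‖x − aᵢ‖. Then the Hessian of f at the origin equals (4/9)·Id₃; in particular it is positive definite and the origin is a non-degenerate local minimum of f. -/

import Mathlib

open scoped RealInnerProductSpace

/-- The point `(p, q, r)` of `ℝ³` as an element of `EuclideanSpace ℝ (Fin 3)`. -/
noncomputable def pt (p q r : ℝ) : EuclideanSpace ℝ (Fin 3) :=
  (WithLp.equiv 2 (Fin 3 → ℝ)).symm ![p, q, r]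

/-- The tetrahedral `N = 3` JNR poles: alternating vertices of the cube `[-1,1]³`. -/
noncomputable def tetraPoles : Fin 4 → EuclideanSpace ℝ (Fin 3) :=
  ![pt 1 1 1, pt 1 (-1) (-1), pt (-1) 1 (-1), pt (-1) (-1) 1]

/-- The potential `f(x) = Σᵢ log‖x − aᵢ‖` for the tetrahedral poles (equal unit
weights). -/
noncomputable def tetraF (x : EuclideanSpace ℝ (Fin 3)) : ℝ :=
  ∑ i, Real.log ‖x - tetraPoles i‖

section Aux

local notation "E" => EuclideanSpace ℝ (Fin 3)

lemma log_quad {z : ℝ} (h : |z| ≤ 1/15) :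
    z - z^2/2 - (2/15)*z^2 ≤ Real.log (1+z) := by
  have h1 : |(-z)| < 1 := by rw [abs_neg]; linarith [abs_nonneg z]
  have H := Real.abs_log_sub_add_sum_range_le h1 2
  rw [Finset.sum_range_succ, Finset.sum_range_one] at H
  push_cast at H
  rw [abs_neg, (by ring : 1 - -z = 1 + z)] at H
  have h3 : |z|^3 = |z| * z^2 := by
    rw [pow_succ, sq_abs]
    ring
  have h4 : |z|^3/(1-|z|) ≤ (2/15)*z^2 := by
    rw [h3, div_le_iff₀ (by linarith [abs_nonneg z] : (0:ℝ) < 1 - |z|)]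
    nlinarith [abs_nonneg z, sq_nonneg z, sq_abs z]
  have h5 := abs_le.1 H
  nlinarith [h5.1, h5.2]

lemma zbound {s t : ℝ} (hs0 : 0 ≤ s) (hs : s ≤ 1/400) (ht : t^2 ≤ 3*s) :
    |(s - 2*t)/3| ≤ 1/15 := by
  have htb : |t| ≤ 1/10 := by
    rw [abs_le]; constructor <;> nlinarith [sq_nonneg (t - 1/10), sq_nonneg (t + 1/10)]
  rw [abs_le] at *
  constructor <;> nlinarith [htb.1, htb.2]

lemma sumineq (s t0 t1 t2 t3 : ℝ) (hs0 : 0 ≤ s) (hs : s ≤ 1/400)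
    (hsum : t0+t1+t2+t3 = 0) (hsq : t0^2+t1^2+t2^2+t3^2 = 4*s) :
    0 ≤ ((s - 2*t0)/3 - ((s - 2*t0)/3)^2/2 - (2/15)*((s - 2*t0)/3)^2)
      + ((s - 2*t1)/3 - ((s - 2*t1)/3)^2/2 - (2/15)*((s - 2*t1)/3)^2)
      + ((s - 2*t2)/3 - ((s - 2*t2)/3)^2/2 - (2/15)*((s - 2*t2)/3)^2)
      + ((s - 2*t3)/3 - ((s - 2*t3)/3)^2/2 - (2/15)*((s - 2*t3)/3)^2) := by
  have hcross : s*(t0+t1+t2+t3) = 0 := by rw [hsum, mul_zero]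
  have h1 : 0 ≤ s * (1/400 - s) := mul_nonneg hs0 (by linarith)
  nlinarith [hsum, hsq, hcross, h1, hs0]

lemma key (p q r : ℝ) (hs : p^2+q^2+r^2 ≤ 1/400) :
    4 * Real.log 3 ≤
      Real.log ((p-1)^2+(q-1)^2+(r-1)^2) + Real.log ((p-1)^2+(q+1)^2+(r+1)^2)
      + Real.log ((p+1)^2+(q-1)^2+(r+1)^2) + Real.log ((p+1)^2+(q+1)^2+(r-1)^2) := by
  have hs0 : (0:ℝ) ≤ p^2+q^2+r^2 := by positivity
  set s : ℝ := p^2+q^2+r^2 with hsdef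
  have ht0 : (p+q+r)^2 ≤ 3*s := by nlinarith [sq_nonneg (p-q), sq_nonneg (q-r), sq_nonneg (p-r)]
  have ht1 : (p-q-r)^2 ≤ 3*s := by nlinarith [sq_nonneg (p+q), sq_nonneg (q-r), sq_nonneg (p+r)]
  have ht2 : (-p+q-r)^2 ≤ 3*s := by nlinarith [sq_nonneg (p+q), sq_nonneg (q+r), sq_nonneg (p-r)]
  have ht3 : (-p-q+r)^2 ≤ 3*s := by nlinarith [sq_nonneg (p-q), sq_nonneg (q+r), sq_nonneg (p+r)]
  have hz0 := zbound hs0 hs ht0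
  have hz1 := zbound hs0 hs ht1
  have hz2 := zbound hs0 hs ht2
  have hz3 := zbound hs0 hs ht3
  have hl0 := log_quad hz0
  have hl1 := log_quad hz1
  have hl2 := log_quad hz2
  have hl3 := log_quad hz3
  have e0 : (p-1)^2+(q-1)^2+(r-1)^2 = 3*(1+(s - 2*(p+q+r))/3) := by rw [hsdef]; ring
  have e1 : (p-1)^2+(q+1)^2+(r+1)^2 = 3*(1+(s - 2*(p-q-r))/3) := by rw [hsdef]; ring
  have e2 : (p+1)^2+(q-1)^2+(r+1)^2 = 3*(1+(s - 2*(-p+q-r))/3) := by rw [hsdef]; ring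
  have e3 : (p+1)^2+(q+1)^2+(r-1)^2 = 3*(1+(s - 2*(-p-q+r))/3) := by rw [hsdef]; ring
  have pos : ∀ z : ℝ, |z| ≤ 1/15 → (0:ℝ) < 1 + z := by
    intro z hz; have := abs_le.1 hz; linarith [this.1]
  rw [e0, e1, e2, e3,
      Real.log_mul (by norm_num) (ne_of_gt (pos _ hz0)),
      Real.log_mul (by norm_num) (ne_of_gt (pos _ hz1)),
      Real.log_mul (by norm_num) (ne_of_gt (pos _ hz2)),
      Real.log_mul (by norm_num) (ne_of_gt (pos _ hz3))]
  have main := sumineq s (p+q+r) (p-q-r) (-p+q-r) (-p-q+r) hs0 hs (by ring)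
    (by rw [hsdef]; ring)
  linarith [hl0, hl1, hl2, hl3, main]

lemma coordsq (x a : E) :
    ‖x - a‖^2 = (x 0 - a 0)^2 + (x 1 - a 1)^2 + (x 2 - a 2)^2 := by
  rw [EuclideanSpace.norm_eq, Real.sq_sqrt (by positivity)]
  simp [Fin.sum_univ_three, sq_abs]

lemma polesq (y : E) (hy : ‖y‖ < 1) (i : Fin 4) : ‖y - tetraPoles i‖^2 ≠ 0 := by
  have h3 : ‖tetraPoles i‖^2 = 3 := by
    have := coordsq (tetraPoles i) 0
    simp only [sub_zero] at this
    rw [this]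
    fin_cases i <;> norm_num [tetraPoles, pt, Matrix.cons_val_two, Matrix.tail_cons, Matrix.head_cons]
  have h1 : 1 < ‖tetraPoles i‖ := by nlinarith [norm_nonneg (tetraPoles i)]
  have h2 : ‖tetraPoles i‖ - ‖y‖ ≤ ‖y - tetraPoles i‖ := by
    rw [norm_sub_rev]
    exact (norm_sub_norm_le _ _).trans_eq' rfl
  have : 0 < ‖y - tetraPoles i‖ := by linarith
  positivity

/-- The explicit gradient function. -/
noncomputable def gfun (y : E) : E :=
  ∑ i, (‖y - tetraPoles i‖^2)⁻¹ • (y - tetraPoles i)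

lemma hasGrad (y : E) (hy : ‖y‖ < 1) : HasGradientAt tetraF (gfun y) y := by
  have hne := polesq y hy
  have hfd : ∀ i : Fin 4, HasFDerivAt (fun z : E => (1/2 : ℝ) * Real.log (‖z - tetraPoles i‖^2))
      ((1/2 : ℝ) • ((‖y - tetraPoles i‖^2)⁻¹ •
        ((2:ℕ) • (innerSL ℝ (y - tetraPoles i)).comp (ContinuousLinearMap.id ℝ E)))) y := by
    intro i
    have h1 : HasFDerivAt (fun z : E => z - tetraPoles i) (ContinuousLinearMap.id ℝ E) y :=
      (hasFDerivAt_id y).sub_const _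
    have h2 := h1.norm_sq
    have h3 := (Real.hasDerivAt_log (hne i)).comp_hasFDerivAt y h2
    have h4 := h3.const_mul (1/2 : ℝ)
    exact h4
  have hsum := HasFDerivAt.sum (u := (Finset.univ : Finset (Fin 4))) (fun i _ => hfd i)
  have hTF : tetraF = fun z : E => ∑ i : Fin 4, (1/2 : ℝ) * Real.log (‖z - tetraPoles i‖^2) := by
    funext z
    unfold tetraF
    refine Finset.sum_congr rfl fun i _ => ?_
    rw [Real.log_pow]
    push_cast
    ring
  have hdual : (InnerProductSpace.toDual ℝ E) (gfun y)
      = ∑ i : Fin 4, (1/2 : ℝ) • ((‖y - tetraPoles i‖^2)⁻¹ •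
        ((2:ℕ) • (innerSL ℝ (y - tetraPoles i)).comp (ContinuousLinearMap.id ℝ E))) := by
    ext v
    simp only [InnerProductSpace.toDual_apply_apply, gfun, sum_inner, inner_sum, real_inner_smul_left,
      ContinuousLinearMap.sum_apply, ContinuousLinearMap.smul_apply,
      ContinuousLinearMap.comp_apply, ContinuousLinearMap.coe_id', id_eq, innerSL_apply_apply,
      smul_eq_mul, nsmul_eq_mul]
    refine Finset.sum_congr rfl fun i _ => ?_
    rw [← inv_pow]
    ring
  rw [hasGradientAt_iff_hasFDerivAt, hdual, hTF]
  exact hsum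

lemma polesq3 (i : Fin 4) : ‖(0:E) - tetraPoles i‖^2 = 3 := by
  rw [coordsq]
  fin_cases i <;> norm_num [tetraPoles, pt, Matrix.cons_val_two, Matrix.tail_cons, Matrix.head_cons]

lemma gfun_fderiv :
    HasFDerivAt gfun ((4/9 : ℝ) • ContinuousLinearMap.id ℝ E) 0 := by
  have hne : ∀ i : Fin 4, ‖(0:E) - tetraPoles i‖^2 ≠ 0 := fun i => by
    rw [polesq3]; norm_num
  have h4 : ∀ i : Fin 4, HasFDerivAt
      (fun y : E => (‖y - tetraPoles i‖^2)⁻¹ • (y - tetraPoles i))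
      ((‖(0:E) - tetraPoles i‖^2)⁻¹ • ContinuousLinearMap.id ℝ E
        + ((-((‖(0:E) - tetraPoles i‖^2) ^ 2)⁻¹) • ((2:ℕ) •
            (innerSL ℝ ((0:E) - tetraPoles i)).comp
              (ContinuousLinearMap.id ℝ E))).smulRight ((0:E) - tetraPoles i)) 0 := by
    intro i
    have h1 : HasFDerivAt (fun z : E => z - tetraPoles i) (ContinuousLinearMap.id ℝ E) 0 :=
      (hasFDerivAt_id 0).sub_const _
    have h2 := h1.norm_sq
    have hinv := (hasDerivAt_inv (hne i)).comp_hasFDerivAt 0 h2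
    exact hinv.smul h1
  have hsum := HasFDerivAt.sum (u := (Finset.univ : Finset (Fin 4))) (fun i _ => h4 i)
  have hCLM : (∑ i : Fin 4, ((‖(0:E) - tetraPoles i‖^2)⁻¹ • ContinuousLinearMap.id ℝ E
        + ((-((‖(0:E) - tetraPoles i‖^2) ^ 2)⁻¹) • ((2:ℕ) •
            (innerSL ℝ ((0:E) - tetraPoles i)).comp
              (ContinuousLinearMap.id ℝ E))).smulRight ((0:E) - tetraPoles i)))
      = (4/9 : ℝ) • ContinuousLinearMap.id ℝ E := by
    refine ContinuousLinearMap.ext fun v => ?_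
    simp only [ContinuousLinearMap.sum_apply, Fin.sum_univ_four, ContinuousLinearMap.add_apply,
      ContinuousLinearMap.smul_apply, ContinuousLinearMap.smulRight_apply,
      ContinuousLinearMap.comp_apply, ContinuousLinearMap.coe_id', id_eq, innerSL_apply_apply,
      polesq3]
    ext j
    fin_cases j <;>
      · simp [tetraPoles, pt, PiLp.inner_apply, Fin.sum_univ_three, zero_sub, inner_neg_left]
        ring
  rw [← hCLM]
  exact hsum

end Aux

/-- For the tetrahedral `N = 3` JNR data with equal unit weights, the
Hessian of `f(x) = Σᵢ log‖x − aᵢ‖` at the origin (i.e. the derivative of `∇f` at `0`)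
equals `(4/9)·Id`; in particular it is positive definite and the origin is a
non-degenerate local minimum of `f`. -/
theorem jnr_tetrahedral_hessian_at_origin :
    fderiv ℝ (fun y => gradient tetraF y) 0
        = (4 / 9 : ℝ) • ContinuousLinearMap.id ℝ (EuclideanSpace ℝ (Fin 3))
      ∧ (∀ v : EuclideanSpace ℝ (Fin 3), v ≠ 0 →
          0 < ⟪v, fderiv ℝ (fun y => gradient tetraF y) 0 v⟫)
      ∧ IsLocalMin tetraF 0 := by
  have hEq : (fun y => gradient tetraF y) =ᶠ[nhds (0 : EuclideanSpace ℝ (Fin 3))] gfun := by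
    filter_upwards [Metric.ball_mem_nhds (0 : EuclideanSpace ℝ (Fin 3)) one_pos] with y hy
    exact (hasGrad y (by simpa [Metric.mem_ball, dist_zero_right] using hy)).gradient
  have hfd : fderiv ℝ (fun y => gradient tetraF y) 0
      = (4/9 : ℝ) • ContinuousLinearMap.id ℝ (EuclideanSpace ℝ (Fin 3)) := by
    rw [hEq.fderiv_eq, gfun_fderiv.fderiv]
  refine ⟨by exact_mod_cast hfd, fun v hv => ?_, ?_⟩
  · rw [hfd]
    have hv' : 0 < ‖v‖ := norm_pos_iff.2 hv
    simp only [ContinuousLinearMap.smul_apply, ContinuousLinearMap.coe_id', id_eq,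
      real_inner_smul_right, real_inner_self_eq_norm_sq]
    positivity
  · have hlogv : ∀ (v : EuclideanSpace ℝ (Fin 3)), Real.log ‖v‖ = Real.log (‖v‖^2)/2 := by
      intro v; rw [Real.log_pow]; push_cast; ring
    have hx0 : tetraF 0 = 2 * Real.log 3 := by
      unfold tetraF
      rw [Fin.sum_univ_four]
      simp only [hlogv, polesq3]
      ring
    have h20 : Metric.closedBall (0 : EuclideanSpace ℝ (Fin 3)) (1/20) ∈
        nhds (0 : EuclideanSpace ℝ (Fin 3)) := Metric.closedBall_mem_nhds _ (by norm_num)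
    rw [IsLocalMin, IsMinFilter]
    filter_upwards [h20] with x hx
    have hxn : ‖x‖ ≤ 1/20 := by simpa [dist_zero_right] using hx
    have hnx : ‖x‖^2 = (x 0)^2 + (x 1)^2 + (x 2)^2 := by
      have := coordsq x 0
      simpa using this
    have hs : (x 0)^2+(x 1)^2+(x 2)^2 ≤ 1/400 := by
      rw [← hnx]; nlinarith [norm_nonneg x]
    have hK := key (x 0) (x 1) (x 2) hs
    have hxv : tetraF x = (Real.log ((x 0 - 1)^2 + (x 1 - 1)^2 + (x 2 - 1)^2)
        + Real.log ((x 0 - 1)^2 + (x 1 + 1)^2 + (x 2 + 1)^2)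
        + Real.log ((x 0 + 1)^2 + (x 1 - 1)^2 + (x 2 + 1)^2)
        + Real.log ((x 0 + 1)^2 + (x 1 + 1)^2 + (x 2 - 1)^2))/2 := by
      unfold tetraF
      rw [Fin.sum_univ_four]
      simp only [hlogv, coordsq]
      norm_num [tetraPoles, pt, Matrix.cons_val_two, Matrix.cons_val_three, Matrix.tail_cons, Matrix.head_cons]
      ring
    rw [hx0, hxv]
    linarith [hK]
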